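/- (Azuma-type lower bound for 0 < q < 1.) If 0 < q < 1, then for every δ > 0, almost surely there exists N such that for all n ≥ N, X_n ≥ n − n^{1/2 + δ} − 1/(1 − q). -/
import Mathlib


open MeasureTheory Filter Topology ENNReal

/-- `X` is a Markov chain on `ℕ` with `X 0 = 0` and transition probabilities
`T(i, i+1) = 1/(q^i + 1)`, `T(i, i) = q^i/(q^i + 1)`, `T(i, j) = 0` otherwise,
encoded by conditioning on every finite path. -/
def IsQChain {Ω : Type*} [MeasurableSpace Ω] (P : Measure Ω)
    (X : ℕ → Ω → ℕ) (q : ℝ) : Prop :=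
  (∀ n, Measurable (X n)) ∧
  (∀ᵐ ω ∂P, X 0 ω = 0) ∧
  ∀ (n : ℕ) (f : ℕ → ℕ),
    P {ω | (∀ k ≤ n, X k ω = f k) ∧ X (n + 1) ω = f n + 1}
      = ENNReal.ofReal (1 / (q ^ f n + 1)) * P {ω | ∀ k ≤ n, X k ω = f k} ∧
    P {ω | (∀ k ≤ n, X k ω = f k) ∧ X (n + 1) ω = f n}
      = ENNReal.ofReal (q ^ f n / (q ^ f n + 1)) * P {ω | ∀ k ≤ n, X k ω = f k} ∧
    ∀ j : ℕ, j ≠ f n → j ≠ f n + 1 →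
      P {ω | (∀ k ≤ n, X k ω = f k) ∧ X (n + 1) ω = j} = 0

/-- Extend a finite tuple to a function on `ℕ` by zero. -/
def qext (n : ℕ) (f : Fin (n + 1) → ℕ) : ℕ → ℕ :=
  fun k => if h : k < n + 1 then f ⟨k, h⟩ else 0

lemma qext_snoc_le {n : ℕ} (f : Fin (n + 1) → ℕ) (j : ℕ) {k : ℕ} (hk : k ≤ n) :
    qext (n + 1) (Fin.snoc f j) k = qext n f k := by
  have h1 : k < n + 2 := by omega
  have h2 : k < n + 1 := by omega
  simp only [qext, dif_pos h1, dif_pos h2]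
  have : (⟨k, h1⟩ : Fin (n + 2)) = Fin.castSucc ⟨k, h2⟩ := rfl
  rw [this, Fin.snoc_castSucc]

lemma qext_snoc_last {n : ℕ} (f : Fin (n + 1) → ℕ) (j : ℕ) :
    qext (n + 1) (Fin.snoc f j) (n + 1) = j := by
  have h1 : n + 1 < n + 2 := by omega
  simp only [qext, dif_pos h1]
  have : (⟨n + 1, h1⟩ : Fin (n + 2)) = Fin.last (n + 1) := rfl
  rw [this, Fin.snoc_last]

lemma qext_apply {n : ℕ} (f : Fin (n + 1) → ℕ) {k : ℕ} (hk : k ≤ n) :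
    qext n f k = f ⟨k, by omega⟩ := by
  simp only [qext, dif_pos (show k < n + 1 by omega)]

/-- The key quantity: `E[q^{X_n}]` written as a sum over cylinders. -/
noncomputable def qA {Ω : Type*} [MeasurableSpace Ω] (P : Measure Ω)
    (X : ℕ → Ω → ℕ) (q : ℝ) (n : ℕ) : ℝ≥0∞ :=
  ∑' f : Fin (n + 1) → ℕ,
    ENNReal.ofReal (q ^ qext n f n) * P {ω | ∀ k ≤ n, X k ω = qext n f k}

section Chain

variable {Ω : Type*} [MeasurableSpace Ω] {P : Measure Ω} [IsProbabilityMeasure P]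
  {X : ℕ → Ω → ℕ} {q : ℝ}

lemma qA_zero_le (hm : ∀ n, Measurable (X n)) (hq : 0 < q) (hq1 : q < 1) :
    qA P X q 0 ≤ 1 := by
  have hle : ∀ f : Fin 1 → ℕ,
      ENNReal.ofReal (q ^ qext 0 f 0) * P {ω | ∀ k ≤ 0, X k ω = qext 0 f k}
        ≤ P {ω | ∀ k ≤ 0, X k ω = qext 0 f k} := by
    intro f
    calc ENNReal.ofReal (q ^ qext 0 f 0) * P {ω | ∀ k ≤ 0, X k ω = qext 0 f k}
        ≤ 1 * P {ω | ∀ k ≤ 0, X k ω = qext 0 f k} := by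
          gcongr
          exact ENNReal.ofReal_le_one.2 (pow_le_one₀ hq.le hq1.le)
      _ = _ := one_mul _
  refine le_trans (ENNReal.tsum_le_tsum hle) ?_
  have hdisj : Pairwise (Function.onFun Disjoint
      fun f : Fin 1 → ℕ => {ω | ∀ k ≤ 0, X k ω = qext 0 f k}) := by
    intro f g hfg
    refine Set.disjoint_left.2 fun ω hf hg => hfg ?_
    funext i
    have hi : i = ⟨0, by omega⟩ := Subsingleton.elim _ _
    have h1 : X 0 ω = qext 0 f 0 := hf 0 le_rfl
    have h2 : X 0 ω = qext 0 g 0 := hg 0 le_rfl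
    rw [qext_apply f le_rfl] at h1
    rw [qext_apply g le_rfl] at h2
    rw [hi]; omega
  have hms : ∀ f : Fin 1 → ℕ,
      MeasurableSet {ω | ∀ k ≤ 0, X k ω = qext 0 f k} := by
    intro f
    have : {ω | ∀ k ≤ 0, X k ω = qext 0 f k} = ⋂ k ∈ Set.Iic 0, X k ⁻¹' {qext 0 f k} := by
      ext ω; simp [Set.mem_iInter]
    rw [this]
    exact MeasurableSet.biInter (Set.to_countable _)
      fun k _ => (hm k) (measurableSet_singleton _)
  rw [← measure_iUnion hdisj hms]
  exact prob_le_one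

lemma qA_succ_le (hX : IsQChain P X q) (hq : 0 < q) (hq1 : q < 1) (n : ℕ) :
    qA P X q (n + 1) ≤ ENNReal.ofReal ((1 + q) / 2) * qA P X q n := by
  obtain ⟨hm, h0, htrans⟩ := hX
  set c : ℝ≥0∞ := ENNReal.ofReal ((1 + q) / 2) with hc
  -- reindex the sum over tuples of length n+2 by (last value, first n+1 values)
  have he := (Fin.snocEquiv (fun _ : Fin (n + 2) => ℕ)).tsum_eq
    (f := fun g : Fin (n + 2) → ℕ =>
      ENNReal.ofReal (q ^ qext (n + 1) g (n + 1)) *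
        P {ω | ∀ k ≤ n + 1, X k ω = qext (n + 1) g k})
  rw [qA, ← he]
  simp only [show ∀ c : ℕ × (Fin (n + 1) → ℕ),
    (Fin.snocEquiv fun _ => ℕ) c = Fin.snoc c.2 c.1 from fun c => rfl]
  have hp := ENNReal.tsum_prod (f := fun (j : ℕ) (f : Fin (n + 1) → ℕ) =>
    ENNReal.ofReal (q ^ qext (n + 1) (Fin.snoc f j) (n + 1)) *
      P {ω | ∀ k ≤ n + 1, X k ω = qext (n + 1) (Fin.snoc f j) k})
  have hcomm := ENNReal.tsum_comm (f := fun (j : ℕ) (f : Fin (n + 1) → ℕ) =>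
    ENNReal.ofReal (q ^ qext (n + 1) (Fin.snoc f j) (n + 1)) *
      P {ω | ∀ k ≤ n + 1, X k ω = qext (n + 1) (Fin.snoc f j) k})
  rw [hp, hcomm]
  have hset : ∀ (f : Fin (n + 1) → ℕ) (j : ℕ),
      {ω | ∀ k ≤ n + 1, X k ω = qext (n + 1) (Fin.snoc f j) k}
        = {ω | (∀ k ≤ n, X k ω = qext n f k) ∧ X (n + 1) ω = j} := by
    intro f j
    ext ω
    simp only [Set.mem_setOf_eq]
    constructor
    · intro h
      refine ⟨fun k hk => ?_, ?_⟩
      · rw [← qext_snoc_le f j hk]; exact h k (by omega)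
      · rw [← qext_snoc_last f j]; exact h (n + 1) le_rfl
    · rintro ⟨h1, h2⟩ k hk
      rcases Nat.lt_succ_iff_lt_or_eq.1 (Nat.lt_succ_of_le hk) with hk' | hk'
      · rw [qext_snoc_le f j (by omega)]; exact h1 k (by omega)
      · subst hk'; rw [qext_snoc_last f j]; exact h2
  have hinner : ∀ f : Fin (n + 1) → ℕ,
      (∑' j : ℕ, ENNReal.ofReal (q ^ qext (n + 1) (Fin.snoc f j) (n + 1)) *
          P {ω | ∀ k ≤ n + 1, X k ω = qext (n + 1) (Fin.snoc f j) k})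
        ≤ c * (ENNReal.ofReal (q ^ qext n f n) *
            P {ω | ∀ k ≤ n, X k ω = qext n f k}) := by
    intro f
    set m : ℕ := qext n f n with hm'
    obtain ⟨ht1, ht2, ht3⟩ := htrans n (qext n f)
    have hterm : ∀ j : ℕ,
        ENNReal.ofReal (q ^ qext (n + 1) (Fin.snoc f j) (n + 1)) *
            P {ω | ∀ k ≤ n + 1, X k ω = qext (n + 1) (Fin.snoc f j) k}
          = ENNReal.ofReal (q ^ j) *
            P {ω | (∀ k ≤ n, X k ω = qext n f k) ∧ X (n + 1) ω = j} := by
      intro j; rw [qext_snoc_last, hset]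
    calc (∑' j : ℕ, ENNReal.ofReal (q ^ qext (n + 1) (Fin.snoc f j) (n + 1)) *
            P {ω | ∀ k ≤ n + 1, X k ω = qext (n + 1) (Fin.snoc f j) k})
        = ∑' j : ℕ, ENNReal.ofReal (q ^ j) *
            P {ω | (∀ k ≤ n, X k ω = qext n f k) ∧ X (n + 1) ω = j} := by
          exact tsum_congr hterm
      _ = ∑ j ∈ ({m, m + 1} : Finset ℕ), ENNReal.ofReal (q ^ j) *
            P {ω | (∀ k ≤ n, X k ω = qext n f k) ∧ X (n + 1) ω = j} := by
          refine tsum_eq_sum fun j hj => ?_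
          simp only [Finset.mem_insert, Finset.mem_singleton, not_or] at hj
          rw [ht3 j hj.1 hj.2, mul_zero]
      _ = ENNReal.ofReal (q ^ m) *
            P {ω | (∀ k ≤ n, X k ω = qext n f k) ∧ X (n + 1) ω = m}
          + ENNReal.ofReal (q ^ (m + 1)) *
            P {ω | (∀ k ≤ n, X k ω = qext n f k) ∧ X (n + 1) ω = m + 1} := by
          rw [Finset.sum_insert (by simp), Finset.sum_singleton]
      _ ≤ c * (ENNReal.ofReal (q ^ m) * P {ω | ∀ k ≤ n, X k ω = qext n f k}) := by
          rw [ht2, ht1, ← mul_assoc, ← mul_assoc, ← mul_assoc,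
            ← ENNReal.ofReal_mul (by positivity), ← ENNReal.ofReal_mul (by positivity),
            ← add_mul, ← ENNReal.ofReal_add (by positivity) (by positivity),
            hc, ← ENNReal.ofReal_mul (by positivity)]
          refine mul_le_mul_left (ENNReal.ofReal_le_ofReal ?_) _
          have hx0 : (0 : ℝ) < q ^ m := pow_pos hq m
          have hx1 : q ^ m ≤ 1 := pow_le_one₀ hq.le hq1.le
          have hd : (0 : ℝ) < q ^ m + 1 := by linarith
          rw [pow_succ]
          rw [show q ^ m * (q ^ m / (q ^ m + 1)) + q ^ m * q * (1 / (q ^ m + 1))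
              = (q ^ m * q ^ m + q ^ m * q) / (q ^ m + 1) by ring]
          rw [div_le_iff₀ hd]
          nlinarith [mul_nonneg (sub_nonneg.2 hx1) (sub_nonneg.2 hq1.le)]
  calc (∑' (f : Fin (n + 1) → ℕ) (j : ℕ),
          ENNReal.ofReal (q ^ qext (n + 1) (Fin.snoc f j) (n + 1)) *
            P {ω | ∀ k ≤ n + 1, X k ω = qext (n + 1) (Fin.snoc f j) k})
      ≤ ∑' f : Fin (n + 1) → ℕ, c * (ENNReal.ofReal (q ^ qext n f n) *
          P {ω | ∀ k ≤ n, X k ω = qext n f k}) := ENNReal.tsum_le_tsum hinner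
    _ = c * qA P X q n := by rw [ENNReal.tsum_mul_left]; rfl

lemma hold_le_qA (hX : IsQChain P X q) (hq : 0 < q) (n : ℕ) :
    P {ω | X (n + 1) ω = X n ω} ≤ qA P X q n := by
  obtain ⟨hm, h0, htrans⟩ := hX
  have hsub : {ω | X (n + 1) ω = X n ω} ⊆
      ⋃ f : Fin (n + 1) → ℕ,
        {ω | (∀ k ≤ n, X k ω = qext n f k) ∧ X (n + 1) ω = qext n f n} := by
    intro ω hω
    refine Set.mem_iUnion.2 ⟨fun i => X i ω, fun k hk => ?_, ?_⟩
    · rw [qext_apply _ hk]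
    · rw [qext_apply _ le_rfl]; exact hω
  refine le_trans (measure_mono hsub) (le_trans (measure_iUnion_le _) ?_)
  refine ENNReal.tsum_le_tsum fun f => ?_
  obtain ⟨ht1, ht2, ht3⟩ := htrans n (qext n f)
  rw [ht2]
  refine mul_le_mul_left (ENNReal.ofReal_le_ofReal ?_) _
  have hx0 : (0 : ℝ) < q ^ qext n f n := pow_pos hq _
  rw [div_le_iff₀ (by linarith)]
  nlinarith

lemma bad_null (hX : IsQChain P X q) (n : ℕ) :
    P {ω | X (n + 1) ω ≠ X n ω ∧ X (n + 1) ω ≠ X n ω + 1} = 0 := by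
  obtain ⟨hm, h0, htrans⟩ := hX
  have hsub : {ω | X (n + 1) ω ≠ X n ω ∧ X (n + 1) ω ≠ X n ω + 1} ⊆
      ⋃ (p : {p : (Fin (n + 1) → ℕ) × ℕ //
          p.2 ≠ qext n p.1 n ∧ p.2 ≠ qext n p.1 n + 1}),
        {ω | (∀ k ≤ n, X k ω = qext n p.1.1 k) ∧ X (n + 1) ω = p.1.2} := by
    rintro ω ⟨h1, h2⟩
    have hq1 : qext n (fun i : Fin (n + 1) => X i ω) n = X n ω := qext_apply _ le_rfl
    refine Set.mem_iUnion.2 ⟨⟨⟨fun i => X i ω, X (n + 1) ω⟩, ?_, ?_⟩, fun k hk => ?_, rfl⟩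
    · rw [hq1]; exact h1
    · rw [hq1]; exact h2
    · rw [qext_apply _ hk]
  refine measure_mono_null hsub (measure_iUnion_null ?_)
  rintro ⟨⟨f, j⟩, hj1, hj2⟩
  exact (htrans n (qext n f)).2.2 j hj1 hj2

end Chain

/-- Azuma-type lower bound for `0 < q < 1`. -/
theorem stmt17 {Ω : Type*} [MeasurableSpace Ω] (P : Measure Ω) [IsProbabilityMeasure P]
    (q : ℝ) (X : ℕ → Ω → ℕ) (hq : 0 < q) (hX : IsQChain P X q) (hq1 : q < 1) :
    ∀ δ : ℝ, 0 < δ → ∀ᵐ ω ∂P, ∃ N : ℕ, ∀ n : ℕ, N ≤ n →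
      (n : ℝ) - (n : ℝ) ^ ((1 : ℝ) / 2 + δ) - 1 / (1 - q) ≤ (X n ω : ℝ) := by
  intro δ hδ
  set c : ℝ≥0∞ := ENNReal.ofReal ((1 + q) / 2) with hc
  have hc1 : c < 1 := ENNReal.ofReal_lt_one.2 (by linarith)
  have hA : ∀ n, qA P X q n ≤ c ^ n := by
    intro n
    induction n with
    | zero => simpa using qA_zero_le hX.1 hq hq1
    | succ n ih =>
      calc qA P X q (n + 1) ≤ c * qA P X q n := qA_succ_le hX hq hq1 n
        _ ≤ c * c ^ n := by gcongr
        _ = c ^ (n + 1) := (pow_succ' c n).symm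
  have hsum : (∑' n, P {ω | X (n + 1) ω = X n ω}) ≠ ⊤ := by
    refine ne_top_of_le_ne_top ?_
      (ENNReal.tsum_le_tsum fun n => (hold_le_qA hX hq n).trans (hA n))
    rw [ENNReal.tsum_geometric]
    exact ENNReal.inv_ne_top.2 (tsub_pos_of_lt hc1).ne'
  have hae1 := ae_eventually_notMem hsum
  have hae2 : ∀ᵐ ω ∂P, ∀ n, ¬(X (n + 1) ω ≠ X n ω ∧ X (n + 1) ω ≠ X n ω + 1) := by
    rw [ae_all_iff]
    intro n
    exact measure_eq_zero_iff_ae_notMem.1 (bad_null hX n)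
  filter_upwards [hae1, hae2] with ω h1 h2
  obtain ⟨N, hN⟩ := eventually_atTop.1 h1
  have hstep : ∀ n, N ≤ n → X (n + 1) ω = X n ω + 1 := by
    intro n hn
    have hne : X (n + 1) ω ≠ X n ω := hN n hn
    have := h2 n
    tauto
  have hgrow : ∀ n, N ≤ n → n ≤ X n ω + N := by
    intro n hn
    induction n, hn using Nat.le_induction with
    | base => omega
    | succ n hn ih => rw [hstep n hn]; omega
  have ht : Tendsto (fun n : ℕ => (n : ℝ) ^ ((1 : ℝ) / 2 + δ)) atTop atTop :=
    (tendsto_rpow_atTop (by linarith)).comp tendsto_natCast_atTop_atTop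
  obtain ⟨M, hM⟩ := eventually_atTop.1 (ht.eventually_ge_atTop (N : ℝ))
  refine ⟨max N M, fun n hn => ?_⟩
  have h1' : n ≤ X n ω + N := hgrow n (le_trans (le_max_left _ _) hn)
  have h2' : (N : ℝ) ≤ (n : ℝ) ^ ((1 : ℝ) / 2 + δ) := hM n (le_trans (le_max_right _ _) hn)
  have h3' : (n : ℝ) ≤ (X n ω : ℝ) + N := by exact_mod_cast h1'
  have h4' : (0 : ℝ) ≤ 1 / (1 - q) := by
    have h5' : (0 : ℝ) < 1 - q := by linarith
    positivity
  linarith
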